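/- arXiv:2502.12162 — 2 statements merged into one kernel-verified Lean document; each statement's English description precedes it below -/
import Mathlib

section
/- Let k be a field and n ≥ 1. For m ≥ 1 put A_m = k[X]/(Xᵐ), let c_m : A_m → k read off the coefficient of X^{m−1}, and let Φ_m : A_m → Homₖ(A_m,k) be the A_m-module isomorphism Φ_m(p)(q) = c_m(pq), where Homₖ(A_m,k) has module structure (p·f)(q) = f(pq). Let π : A_{n+1} → A_n be the canonical projection and π* : Homₖ(A_n,k) → Homₖ(A_{n+1},k) its transpose, π*(f) = f ∘ π. Then the composite Φ_{n+1}⁻¹ ∘ π* ∘ Φ_n : A_n → A_{n+1} is the map induced by multiplication by X, i.e., it sends the class of a polynomial p to the class of X·p. -/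
open Polynomial

/-- let `A_m = k[X]/(Xᵐ)`, let `c_m` read off the coefficient of
`X^{m−1}`, and let `Φ_m : A_m ≅ Homₖ(A_m,k)` be the self-duality isomorphism
`Φ_m(p)(q) = c_m(pq)`.  Let `π : A_{n+1} → A_n` be the canonical projection and
`π*` its transpose.  Then the composite `Φ_{n+1}⁻¹ ∘ π* ∘ Φ_n : A_n → A_{n+1}`
is induced by multiplication by `X`; equivalently, for every polynomial `p` and
every `q ∈ A_{n+1}` one has `Φ_{n+1}(mk(X·p))(q) = Φ_n(mk p)(π q)`. -/
theorem dual_of_projection_is_mul_X (k : Type*) [Field k] (n : ℕ) (hn : 1 ≤ n)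
    (c₁ : (k[X] ⧸ Ideal.span {(X : k[X]) ^ n}) →ₗ[k] k)
    (hc₁ : ∀ p : k[X],
      c₁ (Ideal.Quotient.mk (Ideal.span {(X : k[X]) ^ n}) p) = p.coeff (n - 1))
    (c₂ : (k[X] ⧸ Ideal.span {(X : k[X]) ^ (n + 1)}) →ₗ[k] k)
    (hc₂ : ∀ p : k[X],
      c₂ (Ideal.Quotient.mk (Ideal.span {(X : k[X]) ^ (n + 1)}) p) = p.coeff n)
    (Φ₁ : (k[X] ⧸ Ideal.span {(X : k[X]) ^ n}) ≃ₗ[k]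
          Module.Dual k (k[X] ⧸ Ideal.span {(X : k[X]) ^ n}))
    (hΦ₁ : ∀ x y, Φ₁ x y = c₁ (x * y))
    (Φ₂ : (k[X] ⧸ Ideal.span {(X : k[X]) ^ (n + 1)}) ≃ₗ[k]
          Module.Dual k (k[X] ⧸ Ideal.span {(X : k[X]) ^ (n + 1)}))
    (hΦ₂ : ∀ x y, Φ₂ x y = c₂ (x * y)) :
    ∀ (p : k[X]) (q : k[X] ⧸ Ideal.span {(X : k[X]) ^ (n + 1)}),
      Φ₂ (Ideal.Quotient.mk (Ideal.span {(X : k[X]) ^ (n + 1)}) (X * p)) q =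
        Φ₁ (Ideal.Quotient.mk (Ideal.span {(X : k[X]) ^ n}) p)
          (Ideal.Quotient.factor
            (Ideal.span_le.mpr (Set.singleton_subset_iff.mpr
              (Ideal.mem_span_singleton.mpr (pow_dvd_pow X (Nat.le_succ n))))) q) := by
  intro p q
  obtain ⟨r, rfl⟩ := Ideal.Quotient.mk_surjective q
  rw [hΦ₂, hΦ₁, show (Ideal.Quotient.factor _ (Ideal.Quotient.mk _ r) :
      k[X] ⧸ Ideal.span {(X : k[X]) ^ n}) = Ideal.Quotient.mk _ r from rfl,
    ← map_mul, ← map_mul, hc₂, hc₁]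
  obtain ⟨m, rfl⟩ := Nat.exists_eq_add_of_le hn
  simp [mul_assoc, coeff_X_mul, add_comm 1 m]
end

section
/- Let k be a field and A a Hopf algebra over k. Let H be the k-vector space of A-bimodule endomorphisms F of A ⊗ₖ A, where the bimodule structure is a·(x ⊗ y)·b = ax ⊗ yb. Equip H with the operation (c·F)(r) = F(r ⋆ c), where (x ⊗ y) ⋆ c = Σ x·c₍₁₎ ⊗ S(c₍₂₎)·y. Then this operation makes H a left A-module, evaluation at 1 ⊗ 1 is a k-linear bijection H → A ⊗ₖ A, and under this bijection the left A-action on H corresponds to the action c·(u ⊗ v) = Σ c₍₁₎·u ⊗ v·S(c₍₂₎) on A ⊗ₖ A. -/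
open TensorProduct

/-- For `c : A`, the `k`-linear endomorphism `r ↦ r ⋆ c` of `A ⊗ₖ A` determined by
`(x ⊗ y) ⋆ c = Σ x·c₍₁₎ ⊗ S(c₍₂₎)·y`. -/
noncomputable def starAct (k A : Type*) [Field k] [Ring A] [HopfAlgebra k A] (c : A) :
    A ⊗[k] A →ₗ[k] A ⊗[k] A :=
  TensorProduct.map
      (LinearMap.mul' k A ∘ₗ (TensorProduct.comm k A A).toLinearMap)
      (LinearMap.mul' k A ∘ₗ TensorProduct.map (HopfAlgebra.antipode (R := k)) LinearMap.id) ∘ₗ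
    (TensorProduct.tensorTensorTensorComm k A A A A).toLinearMap ∘ₗ
    TensorProduct.mk k (A ⊗[k] A) (A ⊗[k] A) (Coalgebra.comul c)

/-- For `c : A`, the `k`-linear endomorphism of `A ⊗ₖ A` determined by
`u ⊗ v ↦ Σ c₍₁₎·u ⊗ v·S(c₍₂₎)`. -/
noncomputable def coAct (k A : Type*) [Field k] [Ring A] [HopfAlgebra k A] (c : A) :
    A ⊗[k] A →ₗ[k] A ⊗[k] A :=
  TensorProduct.map
      (LinearMap.mul' k A)
      (LinearMap.mul' k A ∘ₗ (TensorProduct.comm k A A).toLinearMap ∘ₗ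
        TensorProduct.map (HopfAlgebra.antipode (R := k)) LinearMap.id) ∘ₗ
    (TensorProduct.tensorTensorTensorComm k A A A A).toLinearMap ∘ₗ
    TensorProduct.mk k (A ⊗[k] A) (A ⊗[k] A) (Coalgebra.comul c)

/-- Left multiplication `x ⊗ y ↦ ax ⊗ y` of the outer bimodule structure of `A ⊗ₖ A`. -/
noncomputable def lmulMap (k A : Type*) [Field k] [Ring A] [HopfAlgebra k A] (a : A) :
    A ⊗[k] A →ₗ[k] A ⊗[k] A :=
  TensorProduct.map (LinearMap.mulLeft k a) LinearMap.id

/-- Right multiplication `x ⊗ y ↦ x ⊗ yb` of the outer bimodule structure of `A ⊗ₖ A`. -/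
noncomputable def rmulMap (k A : Type*) [Field k] [Ring A] [HopfAlgebra k A] (b : A) :
    A ⊗[k] A →ₗ[k] A ⊗[k] A :=
  TensorProduct.map LinearMap.id (LinearMap.mulRight k b)

/-- The space `H` of `A`-bimodule endomorphisms of `A ⊗ₖ A` (for the outer bimodule
structure `a·(x ⊗ y)·b = ax ⊗ yb`), as a `k`-submodule of the `k`-linear
endomorphisms. -/
noncomputable def bimodEnd (k A : Type*) [Field k] [Ring A] [HopfAlgebra k A] :
    Submodule k ((A ⊗[k] A) →ₗ[k] A ⊗[k] A) where
  carrier := {F | (∀ (a : A) (z : A ⊗[k] A), F (lmulMap k A a z) = lmulMap k A a (F z)) ∧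
                  ∀ (b : A) (z : A ⊗[k] A), F (rmulMap k A b z) = rmulMap k A b (F z)}
  add_mem' := by
    intro F G hF hG
    refine ⟨fun a z => ?_, fun b z => ?_⟩ <;>
      simp [hF.1, hF.2, hG.1, hG.2]
  zero_mem' := by
    refine ⟨fun a z => ?_, fun b z => ?_⟩ <;> simp
  smul_mem' := by
    intro t F hF
    refine ⟨fun a z => ?_, fun b z => ?_⟩ <;>
      simp [hF.1, hF.2]


open Coalgebra HopfAlgebra

section Helpers

variable {k A : Type*} [Field k] [Ring A] [HopfAlgebra k A]

/-- The antipode as a linear map, with the base field explicit. -/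
noncomputable def Sk (k : Type*) {A : Type*} [Field k] [Ring A] [HopfAlgebra k A] :
    A →ₗ[k] A := HopfAlgebra.antipode (R := k)

lemma sum_counit_smul_map {a : A} {ι : Type*} (r : Coalgebra.Repr k a ι) {B : Type*} [AddCommMonoid B] [Module k B]
    (f : A →ₗ[k] B) : ∑ i ∈ r.index, counit (R := k) (r.left i) • f (r.right i) = f a := by
  have := sum_counit_tmul_map_eq (R := k) f a (repr := r)
  apply_fun (TensorProduct.lid k B) at this
  simpa only [map_sum, lid_tmul, one_smul] using this

lemma sum_smul_counit_map {a : A} {ι : Type*} (r : Coalgebra.Repr k a ι) {B : Type*} [AddCommMonoid B] [Module k B]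
    (f : A →ₗ[k] B) : ∑ i ∈ r.index, counit (R := k) (r.right i) • f (r.left i) = f a := by
  have := sum_map_tmul_counit_eq (R := k) f a (repr := r)
  apply_fun (TensorProduct.rid k B) at this
  simpa only [map_sum, rid_tmul, one_smul] using this

lemma sum_Sk_mul {x : A} {ι : Type*} (r : Coalgebra.Repr k x ι) :
    ∑ i ∈ r.index, Sk k (r.left i) * r.right i = counit (R := k) x • 1 :=
  sum_antipode_mul_eq_smul r

lemma sum_mul_Sk {x : A} {ι : Type*} (r : Coalgebra.Repr k x ι) :
    ∑ i ∈ r.index, r.left i * Sk k (r.right i) = counit (R := k) x • 1 :=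
  sum_mul_antipode_eq_smul r

/-- The product of two Sweedler representations represents the product. -/
noncomputable def mulRepr {x y : A} {ι κ : Type*} (r1 : Coalgebra.Repr k x ι)
    (r2 : Coalgebra.Repr k y κ) :
    Coalgebra.Repr k (x * y) (ι × κ) where
  index := r1.index ×ˢ r2.index
  left := fun p => r1.left p.1 * r2.left p.2
  right := fun p => r1.right p.1 * r2.right p.2
  eq := by
    rw [show CoalgebraStruct.comul (R := k) (x * y) =
        CoalgebraStruct.comul (R := k) x * CoalgebraStruct.comul (R := k) y from
        Bialgebra.comul_mul (R := k) x y,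
      ← r1.eq, ← r2.eq, Finset.sum_mul_sum, Finset.sum_product]
    simp [Algebra.TensorProduct.tmul_mul_tmul]

lemma antipode_one' : Sk k (1 : A) = (1 : A) := by
  have h := HopfAlgebra.mul_antipode_rTensor_comul_apply (R := k) (1 : A)
  rw [show (Coalgebra.comul (R := k) (1 : A)) = 1 ⊗ₜ[k] 1 by
      simpa [Algebra.TensorProduct.one_def] using Bialgebra.comul_one k A] at h
  simpa [Sk] using h

/-- `x ⊗ (y ⊗ z) ↦ u * (x * (y * (c * z)))` -/
noncomputable def triMul (u c : A) : A ⊗[k] (A ⊗[k] A) →ₗ[k] A :=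
  LinearMap.mulLeft k u ∘ₗ LinearMap.mul' k A ∘ₗ
    LinearMap.lTensor A (LinearMap.mul' k A ∘ₗ LinearMap.lTensor A (LinearMap.mulLeft k c))

@[simp] lemma triMul_tmul (u c x y z : A) :
    triMul (k := k) u c (x ⊗ₜ (y ⊗ₜ z)) = u * (x * (y * (c * z))) := by
  simp [triMul]

lemma regroup (f g h : A →ₗ[k] A) (L : A ⊗[k] (A ⊗[k] A) →ₗ[k] A) {a : A} {ι : Type*}
    {κ Λ : ι → Type*}
    (r : Coalgebra.Repr k a ι) (r1 : ∀ i, Coalgebra.Repr k (r.left i) (κ i))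
    (r2 : ∀ i, Coalgebra.Repr k (r.right i) (Λ i)) :
    ∑ i ∈ r.index, ∑ j ∈ (r2 i).index,
        L (f (r.left i) ⊗ₜ (g ((r2 i).left j) ⊗ₜ h ((r2 i).right j)))
      = ∑ i ∈ r.index, ∑ j ∈ (r1 i).index,
        L (f ((r1 i).left j) ⊗ₜ (g ((r1 i).right j) ⊗ₜ h (r.right i))) := by
  have := sum_map_tmul_tmul_eq (R := k) f g h a (repr := r) (a₁ := r1) (a₂ := r2)
  apply_fun L at this
  simpa only [map_sum] using this

/-- The antipode is an algebra anti-homomorphism. -/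
lemma antipode_mul' (a b : A) : Sk k (a * b) = Sk k b * Sk k a := by
  classical
  refine Eq.symm ?_
  obtain ⟨ra, rb⟩ : Coalgebra.Repr k a (A × A) × Coalgebra.Repr k b (A × A) := ⟨ℛ k a, ℛ k b⟩
  set ra1 : ∀ i, Coalgebra.Repr k (ra.left i) (A × A) := fun i => ℛ k (ra.left i) with hra1
  set ra2 : ∀ i, Coalgebra.Repr k (ra.right i) (A × A) := fun i => ℛ k (ra.right i) with hra2
  set rb1 : ∀ j, Coalgebra.Repr k (rb.left j) (A × A) := fun j => ℛ k (rb.left j) with hrb1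
  set rb2 : ∀ j, Coalgebra.Repr k (rb.right j) (A × A) := fun j => ℛ k (rb.right j) with hrb2
  calc Sk k b * Sk k a
      = (∑ j ∈ rb.index, counit (R := k) (rb.right j) • Sk k (rb.left j)) *
        (∑ i ∈ ra.index, counit (R := k) (ra.right i) • Sk k (ra.left i)) := by
        rw [sum_smul_counit_map rb (Sk k), sum_smul_counit_map ra (Sk k)]
    _ = ∑ j ∈ rb.index, ∑ i ∈ ra.index,
          (Sk k (rb.left j) * Sk k (ra.left i)) *
            ((counit (R := k) (ra.right i * rb.right j)) • 1) := by
        rw [Finset.sum_mul_sum]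
        refine Finset.sum_congr rfl fun j _ => Finset.sum_congr rfl fun i _ => ?_
        rw [Bialgebra.counit_mul]
        rw [smul_mul_smul_comm, mul_smul_comm, mul_one,
          mul_comm (counit (R := k) (rb.right j))]
    _ = ∑ j ∈ rb.index, ∑ i ∈ ra.index,
          (Sk k (rb.left j) * Sk k (ra.left i)) *
            ∑ p ∈ (ra2 i).index, ∑ q ∈ (rb2 j).index,
              ((ra2 i).left p * (rb2 j).left q) *
                Sk k ((ra2 i).right p * (rb2 j).right q) := by
        refine Finset.sum_congr rfl fun j _ => Finset.sum_congr rfl fun i _ => ?_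
        congr 1
        rw [← sum_mul_Sk (mulRepr (ra2 i) (rb2 j))]
        change ∑ p ∈ (ra2 i).index ×ˢ (rb2 j).index,
          ((ra2 i).left p.1 * (rb2 j).left p.2) *
            Sk k ((ra2 i).right p.1 * (rb2 j).right p.2) = _
        rw [Finset.sum_product]
    _ = ∑ j ∈ rb.index, ∑ q ∈ (rb2 j).index, ∑ i ∈ ra.index, ∑ p ∈ (ra2 i).index,
          triMul (Sk k (rb.left j)) ((rb2 j).left q)
            (Sk k (ra.left i) ⊗ₜ ((ra2 i).left p ⊗ₜ
              ((Sk k ∘ₗ LinearMap.mulRight k ((rb2 j).right q)) ((ra2 i).right p)))) := by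
        refine Finset.sum_congr rfl fun j _ => ?_
        simp only [Finset.mul_sum]
        conv_lhs => enter [2, i]; rw [Finset.sum_comm]
        rw [Finset.sum_comm]
        refine Finset.sum_congr rfl fun q _ => ?_
        refine Finset.sum_congr rfl fun i _ => Finset.sum_congr rfl fun p _ => ?_
        simp only [triMul_tmul, LinearMap.comp_apply, LinearMap.mulRight_apply, mul_assoc]
    _ = ∑ j ∈ rb.index, ∑ q ∈ (rb2 j).index, ∑ i ∈ ra.index, ∑ p ∈ (ra1 i).index,
          triMul (Sk k (rb.left j)) ((rb2 j).left q)
            (Sk k ((ra1 i).left p) ⊗ₜ (((ra1 i).right p) ⊗ₜ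
              ((Sk k ∘ₗ LinearMap.mulRight k ((rb2 j).right q)) (ra.right i)))) := by
        refine Finset.sum_congr rfl fun j _ => Finset.sum_congr rfl fun q _ => ?_
        exact regroup (Sk k) LinearMap.id (Sk k ∘ₗ LinearMap.mulRight k ((rb2 j).right q))
          (triMul (Sk k (rb.left j)) ((rb2 j).left q)) ra ra1 ra2
    _ = ∑ j ∈ rb.index, ∑ q ∈ (rb2 j).index, ∑ i ∈ ra.index,
          counit (R := k) (ra.left i) •
            (Sk k (rb.left j) * ((rb2 j).left q *
              Sk k (ra.right i * (rb2 j).right q))) := by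
        refine Finset.sum_congr rfl fun j _ => Finset.sum_congr rfl fun q _ =>
          Finset.sum_congr rfl fun i _ => ?_
        simp only [triMul_tmul, LinearMap.comp_apply, LinearMap.mulRight_apply]
        rw [← Finset.mul_sum]
        congr 1
        simp only [← mul_assoc]
        rw [← Finset.sum_mul, ← Finset.sum_mul, sum_Sk_mul (ra1 i)]
        simp [smul_mul_assoc, mul_assoc]
    _ = ∑ j ∈ rb.index, ∑ q ∈ (rb2 j).index,
          Sk k (rb.left j) * ((rb2 j).left q * Sk k (a * (rb2 j).right q)) := by
        refine Finset.sum_congr rfl fun j _ => Finset.sum_congr rfl fun q _ => ?_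
        exact sum_counit_smul_map ra
          (LinearMap.mulLeft k (Sk k (rb.left j)) ∘ₗ LinearMap.mulLeft k ((rb2 j).left q) ∘ₗ
            Sk k ∘ₗ LinearMap.mulRight k ((rb2 j).right q))
    _ = ∑ j ∈ rb.index, ∑ q ∈ (rb1 j).index,
          Sk k ((rb1 j).left q) * ((rb1 j).right q * Sk k (a * rb.right j)) := by
        have := regroup (Sk k) LinearMap.id (Sk k ∘ₗ LinearMap.mulLeft k a)
          (triMul 1 1) rb rb1 rb2
        simpa only [triMul_tmul, LinearMap.comp_apply, LinearMap.mulLeft_apply,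
          LinearMap.id_coe, id_eq, one_mul] using this
    _ = ∑ j ∈ rb.index, counit (R := k) (rb.left j) • Sk k (a * rb.right j) := by
        refine Finset.sum_congr rfl fun j _ => ?_
        simp only [← mul_assoc]
        rw [← Finset.sum_mul, sum_Sk_mul (rb1 j)]
        simp [smul_mul_assoc]
    _ = Sk k (a * b) := sum_counit_smul_map rb (Sk k ∘ₗ LinearMap.mulLeft k a)

lemma starAct_tmul (c x y : A) {ι : Type*} (r : Coalgebra.Repr k c ι) :
    starAct k A c (x ⊗ₜ[k] y) =
      ∑ i ∈ r.index, (x * r.left i) ⊗ₜ[k] (Sk k (r.right i) * y) := by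
  rw [starAct]
  simp only [LinearMap.comp_apply, TensorProduct.mk_apply, ← r.eq]
  simp [TensorProduct.sum_tmul, map_sum, Sk]

lemma coAct_tmul (c u v : A) {ι : Type*} (r : Coalgebra.Repr k c ι) :
    coAct k A c (u ⊗ₜ[k] v) =
      ∑ i ∈ r.index, (r.left i * u) ⊗ₜ[k] (v * Sk k (r.right i)) := by
  rw [coAct]
  simp only [LinearMap.comp_apply, TensorProduct.mk_apply, ← r.eq]
  simp [TensorProduct.sum_tmul, map_sum, Sk]

lemma lmulMap_tmul (a x y : A) : lmulMap k A a (x ⊗ₜ[k] y) = (a * x) ⊗ₜ[k] y := by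
  simp [lmulMap]

lemma rmulMap_tmul (b x y : A) : rmulMap k A b (x ⊗ₜ[k] y) = x ⊗ₜ[k] (y * b) := by
  simp [rmulMap]

lemma starAct_comp_lmul (c a : A) :
    starAct k A c ∘ₗ lmulMap k A a = lmulMap k A a ∘ₗ starAct k A c := by
  apply TensorProduct.ext'
  intro x y
  simp only [LinearMap.comp_apply, lmulMap_tmul, starAct_tmul c _ _ (ℛ k c), map_sum,
    lmulMap_tmul, mul_assoc]

lemma starAct_comp_rmul (c b : A) :
    starAct k A c ∘ₗ rmulMap k A b = rmulMap k A b ∘ₗ starAct k A c := by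
  apply TensorProduct.ext'
  intro x y
  simp only [LinearMap.comp_apply, rmulMap_tmul, starAct_tmul c _ _ (ℛ k c), map_sum,
    rmulMap_tmul, mul_assoc]

/-- The trivial representation of `comul 1`. -/
noncomputable def oneRepr : Coalgebra.Repr k (1 : A) ℕ where
  index := {0}
  left := fun _ => 1
  right := fun _ => 1
  eq := by
    simp only [Finset.sum_singleton]
    rw [show CoalgebraStruct.comul (R := k) (1 : A) = 1 from Bialgebra.comul_one (R := k) (A := A),
      Algebra.TensorProduct.one_def]

lemma starAct_one' : starAct k A (1 : A) = LinearMap.id := by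
  apply TensorProduct.ext'
  intro x y
  rw [starAct_tmul 1 x y oneRepr]
  simp [oneRepr, antipode_one']

lemma starAct_mul (c c' : A) :
    starAct k A (c * c') = starAct k A c' ∘ₗ starAct k A c := by
  apply TensorProduct.ext'
  intro x y
  rw [LinearMap.comp_apply, starAct_tmul (c * c') x y (mulRepr (ℛ k c) (ℛ k c')),
    starAct_tmul c x y (ℛ k c), map_sum]
  change ∑ p ∈ (ℛ k c).index ×ˢ (ℛ k c').index,
      (x * ((ℛ k c).left p.1 * (ℛ k c').left p.2)) ⊗ₜ[k]
        (Sk k ((ℛ k c).right p.1 * (ℛ k c').right p.2) * y) = _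
  rw [Finset.sum_product]
  refine Finset.sum_congr rfl fun i _ => ?_
  rw [starAct_tmul c' _ _ (ℛ k c')]
  refine Finset.sum_congr rfl fun j _ => ?_
  rw [antipode_mul', mul_assoc, mul_assoc]

lemma starAct_add' (c c' : A) :
    starAct k A (c + c') = starAct k A c + starAct k A c' := by
  apply LinearMap.ext
  intro z
  simp [starAct, map_add, LinearMap.add_apply]

lemma starAct_csmul (t : k) (c : A) :
    starAct k A (t • c) = t • starAct k A c := by
  apply LinearMap.ext
  intro z
  simp [starAct, map_smul, LinearMap.smul_apply]

/-- `w ↦ (x ⊗ y ↦ x·w·y)` for the outer bimodule structure. -/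
noncomputable def toEnd (w : A ⊗[k] A) : A ⊗[k] A →ₗ[k] A ⊗[k] A :=
  TensorProduct.map (LinearMap.mul' k A ∘ₗ (TensorProduct.comm k A A).toLinearMap)
      (LinearMap.mul' k A) ∘ₗ
    (TensorProduct.tensorTensorTensorComm k A A A A).toLinearMap ∘ₗ
    TensorProduct.mk k (A ⊗[k] A) (A ⊗[k] A) w

lemma toEnd_apply (w : A ⊗[k] A) (x y : A) :
    toEnd w (x ⊗ₜ[k] y) = lmulMap k A x (rmulMap k A y w) := by
  induction w using TensorProduct.induction_on with
  | zero => simp [toEnd]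
  | tmul u v => simp [toEnd, lmulMap_tmul, rmulMap_tmul]
  | add w1 w2 h1 h2 =>
      simp only [toEnd, LinearMap.comp_apply, TensorProduct.mk_apply] at h1 h2 ⊢
      rw [TensorProduct.add_tmul, map_add, map_add, h1, h2, map_add, map_add]

lemma toEnd_one (w : A ⊗[k] A) : toEnd w ((1 : A) ⊗ₜ[k] (1 : A)) = w := by
  rw [toEnd_apply]
  simp [lmulMap, rmulMap, LinearMap.mulLeft_one, LinearMap.mulRight_one, TensorProduct.map_id]

lemma lmulMap_mul (a b : A) : lmulMap k A (a * b) = lmulMap k A a ∘ₗ lmulMap k A b := by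
  apply TensorProduct.ext'
  intro x y
  simp [lmulMap_tmul, mul_assoc]

lemma rmulMap_mul (a b : A) : rmulMap k A (a * b) = rmulMap k A b ∘ₗ rmulMap k A a := by
  apply TensorProduct.ext'
  intro x y
  simp [rmulMap_tmul, mul_assoc]

lemma lmul_rmul_comm (a b : A) :
    lmulMap k A a ∘ₗ rmulMap k A b = rmulMap k A b ∘ₗ lmulMap k A a := by
  apply TensorProduct.ext'
  intro x y
  simp [lmulMap_tmul, rmulMap_tmul]

lemma toEnd_mem (w : A ⊗[k] A) : toEnd w ∈ bimodEnd k A := by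
  constructor
  · intro a z
    induction z using TensorProduct.induction_on with
    | zero => simp
    | tmul x y =>
        rw [lmulMap_tmul, toEnd_apply, toEnd_apply,
          LinearMap.congr_fun (lmulMap_mul (k := k) (A := A) a x) (rmulMap k A y w)]
        rfl
    | add z1 z2 h1 h2 => simp only [map_add, h1, h2]
  · intro b z
    induction z using TensorProduct.induction_on with
    | zero => simp
    | tmul x y =>
        rw [rmulMap_tmul, toEnd_apply, toEnd_apply,
          LinearMap.congr_fun (rmulMap_mul (k := k) (A := A) y b) w,
          LinearMap.comp_apply,
          ← LinearMap.comp_apply (lmulMap k A x) (rmulMap k A b),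
          lmul_rmul_comm]
        rfl
    | add z1 z2 h1 h2 => simp only [map_add, h1, h2]

lemma eq_toEnd (F : (A ⊗[k] A) →ₗ[k] A ⊗[k] A) (hF : F ∈ bimodEnd k A) :
    F = toEnd (F ((1 : A) ⊗ₜ[k] (1 : A))) := by
  apply TensorProduct.ext'
  intro x y
  have h1 : x ⊗ₜ[k] y = lmulMap k A x (rmulMap k A y ((1 : A) ⊗ₜ[k] (1 : A))) := by
    simp [lmulMap_tmul, rmulMap_tmul]
  conv_lhs => rw [h1, hF.1, hF.2]
  rw [toEnd_apply]

lemma coAct_apply (c : A) (w : A ⊗[k] A) {ι : Type*} (r : Coalgebra.Repr k c ι) :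
    coAct k A c w =
      ∑ i ∈ r.index, lmulMap k A (r.left i) (rmulMap k A (Sk k (r.right i)) w) := by
  induction w using TensorProduct.induction_on with
  | zero => simp
  | tmul u v =>
      rw [coAct_tmul c u v r]
      refine Finset.sum_congr rfl fun i _ => ?_
      rw [rmulMap_tmul, lmulMap_tmul]
  | add w1 w2 h1 h2 =>
      simp only [map_add, h1, h2, ← Finset.sum_add_distrib]

end Helpers

/-- the operation `(c·F)(r) = F(r ⋆ c)` makes the space `H` of bimodule
endomorphisms of `A ⊗ₖ A` a left `A`-module, evaluation at `1 ⊗ 1` is a `k`-linear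
bijection `H → A ⊗ₖ A`, and under this bijection the `A`-action on `H` corresponds to
the action `c·(u ⊗ v) = Σ c₍₁₎·u ⊗ v·S(c₍₂₎)` on `A ⊗ₖ A`. -/
theorem bimodEnd_module_eval_bijective (k A : Type*) [Field k] [Ring A] [HopfAlgebra k A] :
    (∀ (c : A) (F : (A ⊗[k] A) →ₗ[k] A ⊗[k] A), F ∈ bimodEnd k A →
        F ∘ₗ starAct k A c ∈ bimodEnd k A) ∧
    (∀ F : (A ⊗[k] A) →ₗ[k] A ⊗[k] A, F ∘ₗ starAct k A (1 : A) = F) ∧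
    (∀ (c c' : A) (F : (A ⊗[k] A) →ₗ[k] A ⊗[k] A),
        F ∘ₗ starAct k A (c * c') = (F ∘ₗ starAct k A c') ∘ₗ starAct k A c) ∧
    (∀ (c c' : A) (F : (A ⊗[k] A) →ₗ[k] A ⊗[k] A),
        F ∘ₗ starAct k A (c + c') = F ∘ₗ starAct k A c + F ∘ₗ starAct k A c') ∧
    (∀ (t : k) (c : A) (F : (A ⊗[k] A) →ₗ[k] A ⊗[k] A),
        F ∘ₗ starAct k A (t • c) = t • (F ∘ₗ starAct k A c)) ∧
    (∀ (c : A) (F G : (A ⊗[k] A) →ₗ[k] A ⊗[k] A),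
        (F + G) ∘ₗ starAct k A c = F ∘ₗ starAct k A c + G ∘ₗ starAct k A c) ∧
    Function.Bijective
      (fun F : bimodEnd k A => F.1 ((1 : A) ⊗ₜ[k] (1 : A))) ∧
    ∀ (c : A) (F : (A ⊗[k] A) →ₗ[k] A ⊗[k] A), F ∈ bimodEnd k A →
      (F ∘ₗ starAct k A c) ((1 : A) ⊗ₜ[k] (1 : A)) =
        coAct k A c (F ((1 : A) ⊗ₜ[k] (1 : A))) := by
  classical
  refine ⟨?_, ?_, ?_, ?_, ?_, ?_, ?_, ?_⟩
  · intro c F hF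
    refine ⟨fun a z => ?_, fun b z => ?_⟩
    · simp only [LinearMap.comp_apply]
      rw [← LinearMap.comp_apply (starAct k A c) (lmulMap k A a), starAct_comp_lmul,
        LinearMap.comp_apply, hF.1]
    · simp only [LinearMap.comp_apply]
      rw [← LinearMap.comp_apply (starAct k A c) (rmulMap k A b), starAct_comp_rmul,
        LinearMap.comp_apply, hF.2]
  · intro F
    rw [starAct_one', LinearMap.comp_id]
  · intro c c' F
    rw [starAct_mul, LinearMap.comp_assoc]
  · intro c c' F
    rw [starAct_add', LinearMap.comp_add]
  · intro t c F
    apply LinearMap.ext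
    intro z
    rw [starAct_csmul]
    simp
  · intro c F G
    rw [LinearMap.add_comp]
  · constructor
    · intro F G h
      apply Subtype.ext
      rw [eq_toEnd F.1 F.2, eq_toEnd G.1 G.2]
      simp only at h
      rw [h]
    · intro w
      exact ⟨⟨toEnd w, toEnd_mem w⟩, toEnd_one w⟩
  · intro c F hF
    rw [LinearMap.comp_apply, starAct_tmul c 1 1 (ℛ k c), map_sum,
      coAct_apply c (F ((1 : A) ⊗ₜ[k] (1 : A))) (ℛ k c)]
    refine Finset.sum_congr rfl fun i _ => ?_
    have h1 : (1 * (ℛ k c).left i) ⊗ₜ[k] (Sk k ((ℛ k c).right i) * 1) =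
        lmulMap k A ((ℛ k c).left i)
          (rmulMap k A (Sk k ((ℛ k c).right i)) ((1 : A) ⊗ₜ[k] (1 : A))) := by
      simp [lmulMap_tmul, rmulMap_tmul]
    rw [h1, hF.1, hF.2]
end
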